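/- Let p : 𝔻 → [1,∞) be a measurable variable exponent with 1 < ess inf_{z∈𝔻} p(z) and ess sup_{z∈𝔻} p(z) < ∞, and suppose there is a constant C > 0 such that ∫_𝔻 |Pf(z)|^{p(z)} dA(z) ≤ C ∫_𝔻 |f(z)|^{p(z)} dA(z) for every measurable f : 𝔻 → ℂ with ∫_𝔻 |f(z)|^{p(z)} dA(z) < ∞. Then for every τ ∈ 𝔻 there exist a compact set K ⊆ 𝔻 that is a neighborhood of τ and a constant c ∈ ℝ such that p(z) = c for almost every z ∈ K. -/

import Mathlib

open MeasureTheory Complex Set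

noncomputable section

/-- The open unit disc in the complex plane. -/
def unitDisc : Set ℂ := {z : ℂ | ‖z‖ < 1}

/-- The normalized Lebesgue area measure on `ℂ` (Lebesgue measure divided by `π`). -/
def areaD : Measure ℂ := (ENNReal.ofReal Real.pi)⁻¹ • volume

/-- The Bergman projection on the unit disc. -/
def bergmanP (f : ℂ → ℂ) (z : ℂ) : ℂ :=
  ∫ w in unitDisc, f w / (1 - (starRingEnd ℂ) w * z) ^ 2 ∂areaD

lemma exists_ae_const (ν : Measure ℂ) (p : ℂ → ℝ)
    (hT : ∃ a : ℚ, ν {z | p z < a} ≠ 0)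
    (hB : ∀ a : ℚ, ν {z | p z < a} ≠ 0 → (1:ℝ) ≤ a)
    (h : ∀ a b : ℚ, (a:ℝ) < b → ν {z | p z < a} = 0 ∨ ν {z | (b:ℝ) < p z} = 0) :
    ∃ c : ℝ, ∀ᵐ z ∂ν, p z = c := by
  set T : Set ℝ := {x : ℝ | ∃ a : ℚ, (a:ℝ) = x ∧ ν {z | p z < a} ≠ 0} with hTdef
  have hTne : T.Nonempty := by
    obtain ⟨a, ha⟩ := hT
    exact ⟨a, a, rfl, ha⟩
  have hTbdd : BddBelow T := by
    refine ⟨1, ?_⟩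
    rintro x ⟨a, rfl, ha⟩
    exact hB a ha
  set c := sInf T with hc
  refine ⟨c, ?_⟩
  have h1 : ν {z | p z < c} = 0 := by
    have hsub : {z | p z < c} ⊆ ⋃ q : ℚ, {z | p z < q ∧ (q:ℝ) < c} := by
      intro z hz
      obtain ⟨q, hq1, hq2⟩ := exists_rat_btwn (show p z < c from hz)
      exact mem_iUnion.2 ⟨q, hq1, hq2⟩
    refine measure_mono_null hsub (measure_iUnion_null fun q => ?_)
    by_cases hq : (q:ℝ) < c
    · have : ν {z | p z < q} = 0 := by
        by_contra hne
        exact absurd (csInf_le hTbdd ⟨q, rfl, hne⟩) (not_le.2 hq)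
      refine measure_mono_null (fun z hz => hz.1) this
    · have : {z : ℂ | p z < q ∧ (q:ℝ) < c} = ∅ := by
        ext z; simp only [mem_setOf_eq, mem_empty_iff_false, iff_false, not_and]
        exact fun _ => hq
      simp [this]
  have h2 : ν {z | c < p z} = 0 := by
    have hsub : {z | c < p z} ⊆ ⋃ q : ℚ, {z | (q:ℝ) < p z ∧ c < q} := by
      intro z hz
      obtain ⟨q, hq1, hq2⟩ := exists_rat_btwn (show c < p z from hz)
      exact mem_iUnion.2 ⟨q, hq2, hq1⟩
    refine measure_mono_null hsub (measure_iUnion_null fun q => ?_)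
    by_cases hq : c < (q:ℝ)
    · obtain ⟨x, ⟨a, rfl, ha⟩, hx⟩ := exists_lt_of_csInf_lt hTne hq
      have := (h a q hx).resolve_left ha
      refine measure_mono_null (fun z hz => hz.1) this
    · have : {z : ℂ | (q:ℝ) < p z ∧ c < q} = ∅ := by
        ext z; simp only [mem_setOf_eq, mem_empty_iff_false, iff_false, not_and]
        exact fun _ => hq
      simp [this]
  have : ν ({z | p z < c} ∪ {z | c < p z}) = 0 := measure_union_null h1 h2
  have h3 : ν {z | p z ≠ c} = 0 := by
    refine measure_mono_null ?_ this
    intro z hz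
    simp only [mem_union, mem_setOf_eq]
    exact lt_or_gt_of_ne hz
  exact h3

lemma kernel_bound (τ : ℂ) (hτ : ‖τ‖ < 1) :
    ∃ r κ : ℝ, 0 < r ∧ 0 < κ ∧ Metric.closedBall τ r ⊆ unitDisc ∧
      ∀ w ∈ Metric.closedBall τ r, ∀ z ∈ Metric.closedBall τ r,
        κ ≤ (((1 - (starRingEnd ℂ) w * z) ^ 2)⁻¹).re ∧
        ‖((1 - (starRingEnd ℂ) w * z) ^ 2)⁻¹‖ ≤ 3 * κ := by
  set G : ℂ × ℂ → ℂ := fun q => ((1 - (starRingEnd ℂ) q.1 * q.2) ^ 2)⁻¹ with hG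
  have ht1 : Complex.normSq τ < 1 := by
    have := Complex.sq_norm τ
    nlinarith [norm_nonneg τ]
  set u : ℝ := (((1 : ℝ) - Complex.normSq τ) ^ 2)⁻¹ with hu
  have hu0 : 0 < u := by
    have : (0:ℝ) < 1 - Complex.normSq τ := by linarith
    positivity
  have hGval : G (τ, τ) = (u : ℂ) := by
    have h1 : (starRingEnd ℂ) τ * τ = (Complex.normSq τ : ℂ) := by
      rw [mul_comm]; exact Complex.mul_conj τ
    simp only [hG, h1, hu]
    push_cast
    ring_nf
  have hne : (1 - (starRingEnd ℂ) τ * τ) ^ 2 ≠ 0 := by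
    intro h
    have : G (τ, τ) = 0 := by simp [hG, h]
    rw [hGval] at this
    exact absurd (by exact_mod_cast this) (ne_of_gt hu0)
  have hcont : ContinuousAt G (τ, τ) := by
    apply ContinuousAt.inv₀
    · exact ((continuous_const.sub ((Complex.continuous_conj.comp continuous_fst).mul
        continuous_snd)).pow 2).continuousAt
    · exact hne
  have hball : Metric.ball ((u : ℂ)) (u / 2) ∈ nhds (G (τ, τ)) := by
    rw [hGval]; exact Metric.ball_mem_nhds _ (by positivity)
  obtain ⟨δ, hδ0, hδ⟩ := Metric.eventually_nhds_iff.mp (hcont.eventually_mem hball)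
  set r : ℝ := min (δ / 2) ((1 - ‖τ‖) / 2) with hr
  have hr0 : 0 < r := by
    apply lt_min (by positivity)
    have : ‖τ‖ < 1 := hτ
    linarith
  refine ⟨r, u / 2, hr0, by positivity, ?_, ?_⟩
  · intro z hz
    simp only [unitDisc, mem_setOf_eq]
    have h1 : dist z τ ≤ r := Metric.mem_closedBall.mp hz
    have h2 : ‖z‖ ≤ ‖τ‖ + r := by
      calc ‖z‖ ≤ ‖τ‖ + ‖z - τ‖ := by
            have := norm_sub_norm_le z τ
            linarith
        _ ≤ ‖τ‖ + r := by
            rw [Complex.dist_eq] at h1; linarith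
    have : r ≤ (1 - ‖τ‖) / 2 := min_le_right _ _
    linarith
  · intro w hw z hz
    have hd : dist (w, z) (τ, τ) < δ := by
      rw [Prod.dist_eq]
      have h1 : dist w τ ≤ r := Metric.mem_closedBall.mp hw
      have h2 : dist z τ ≤ r := Metric.mem_closedBall.mp hz
      have : r < δ := lt_of_le_of_lt (min_le_left _ _) (by linarith)
      exact max_lt (lt_of_le_of_lt h1 this) (lt_of_le_of_lt h2 this)
    have hmem := hδ hd
    rw [Metric.mem_ball, Complex.dist_eq] at hmem
    have habs : ‖G (w, z) - (u : ℂ)‖ < u / 2 := hmem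
    constructor
    · have h1 : |(G (w, z) - (u : ℂ)).re| ≤ ‖G (w, z) - (u : ℂ)‖ :=
        Complex.abs_re_le_norm _
      have h2 : (G (w, z) - (u : ℂ)).re = (G (w, z)).re - u := by simp
      have : (G (w, z)).re - u ≥ -(u / 2) := by
        rw [← h2]
        have := abs_le.mp (le_of_lt (lt_of_le_of_lt h1 habs))
        linarith [this.1]
      simp only [hG] at this ⊢
      linarith
    · have : ‖G (w, z)‖ ≤ ‖(u : ℂ)‖ + u / 2 := by
        calc ‖G (w, z)‖ = ‖(G (w, z) - (u : ℂ)) + (u : ℂ)‖ := by ring_nf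
          _ ≤ ‖G (w, z) - (u : ℂ)‖ + ‖(u : ℂ)‖ :=
              norm_add_le _ _
          _ ≤ ‖(u : ℂ)‖ + u / 2 := by linarith
      have h3 : ‖(u : ℂ)‖ = u := by
        rw [Complex.norm_of_nonneg hu0.le]
      simp only [hG] at this ⊢
      rw [h3] at this
      linarith

lemma unitDisc_eq_ball : unitDisc = Metric.ball (0:ℂ) 1 := by
  ext z; simp [unitDisc, Metric.mem_ball, Complex.dist_eq]

lemma measurableSet_unitDisc : MeasurableSet unitDisc := by
  rw [unitDisc_eq_ball]; exact measurableSet_ball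

lemma areaD_unitDisc_lt_top : areaD unitDisc < ⊤ := by
  rw [unitDisc_eq_ball]
  simp only [areaD, Measure.smul_apply, smul_eq_mul]
  exact ENNReal.mul_lt_top (ENNReal.inv_lt_top.2 (ENNReal.ofReal_pos.2 Real.pi_pos))
    measure_ball_lt_top

lemma areaD_ball_pos (τ : ℂ) (r : ℝ) (hr : 0 < r) : 0 < areaD (Metric.ball τ r) := by
  simp only [areaD, Measure.smul_apply, smul_eq_mul]
  refine ENNReal.mul_pos ?_ (Metric.measure_ball_pos volume τ hr).ne'
  simp only [ne_eq, ENNReal.inv_eq_zero]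
  exact (ENNReal.ofReal_lt_top).ne

lemma bergman_lower (τ : ℂ) (r κ lam : ℝ) (hlam : 0 ≤ lam)
    (hker : ∀ w ∈ Metric.closedBall τ r, ∀ z ∈ Metric.closedBall τ r,
        κ ≤ (((1 - (starRingEnd ℂ) w * z) ^ 2)⁻¹).re ∧
        ‖((1 - (starRingEnd ℂ) w * z) ^ 2)⁻¹‖ ≤ 3 * κ)
    (E : Set ℂ) (hE : MeasurableSet E) (hEsub : E ⊆ Metric.closedBall τ r)
    (hEd : E ⊆ unitDisc) (hfin : areaD E < ⊤)
    (z : ℂ) (hz : z ∈ Metric.closedBall τ r) :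
    lam * κ * (areaD E).toReal ≤ ‖bergmanP (E.indicator fun _ => (lam:ℂ)) z‖ := by
  set D : ℂ → ℂ := fun w => (1 - (starRingEnd ℂ) w * z) ^ 2 with hD
  set g : ℂ → ℂ := fun w => (lam : ℂ) * (D w)⁻¹ with hg
  have hDm : Measurable D := by
    exact ((continuous_const.sub (Complex.continuous_conj.mul continuous_const)).pow 2).measurable
  have hgm : Measurable g := measurable_const.mul hDm.inv
  have hrepr : bergmanP (E.indicator fun _ => (lam:ℂ)) z = ∫ w in E, g w ∂areaD := by
    rw [bergmanP]
    have hfun : ∀ w, (E.indicator fun _ => (lam:ℂ)) w / D w = E.indicator g w := by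
      intro w
      by_cases hw : w ∈ E
      · simp [Set.indicator_of_mem hw, hg, div_eq_mul_inv]
      · simp [Set.indicator_of_notMem hw]
    rw [show (fun w => (E.indicator fun _ => (lam:ℂ)) w / (1 - (starRingEnd ℂ) w * z) ^ 2) = E.indicator g from funext hfun]
    rw [MeasureTheory.setIntegral_indicator hE, Set.inter_eq_self_of_subset_right hEd]
  haveI : IsFiniteMeasure (areaD.restrict E) := ⟨by rwa [Measure.restrict_apply_univ]⟩
  have hInt : Integrable g (areaD.restrict E) := by
    refine Integrable.mono' (g := fun _ => lam * (3 * κ)) (integrable_const _)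
      hgm.aestronglyMeasurable ?_
    refine (ae_restrict_iff' hE).mpr (ae_of_all _ fun w hw => ?_)
    have h2 := (hker w (hEsub hw) z hz).2
    simp only [hg, hD, norm_mul, Complex.norm_real, Real.norm_eq_abs]
    rw [_root_.abs_of_nonneg hlam]
    exact mul_le_mul_of_nonneg_left h2 hlam
  have hre : (∫ w in E, g w ∂areaD).re = ∫ w in E, (g w).re ∂areaD := by
    have := _root_.integral_re (μ := areaD.restrict E) hInt
    simpa [RCLike.re_to_complex] using this.symm
  have hmono : lam * κ * (areaD E).toReal ≤ ∫ w in E, (g w).re ∂areaD := by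
    have hconst : ∫ _ in E, lam * κ ∂areaD = (areaD E).toReal * (lam * κ) := by
      rw [MeasureTheory.setIntegral_const, smul_eq_mul, measureReal_def]
    calc lam * κ * (areaD E).toReal = ∫ _ in E, lam * κ ∂areaD := by rw [hconst]; ring
      _ ≤ ∫ w in E, (g w).re ∂areaD := by
          refine MeasureTheory.setIntegral_mono_on (integrable_const _) hInt.re hE ?_
          intro w hw
          have h1 := (hker w (hEsub hw) z hz).1
          have : (g w).re = lam * ((D w)⁻¹).re := by
            simp [hg, Complex.mul_re, Complex.ofReal_re, Complex.ofReal_im]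
          rw [this]
          exact mul_le_mul_of_nonneg_left h1 hlam
  calc lam * κ * (areaD E).toReal ≤ ∫ w in E, (g w).re ∂areaD := hmono
    _ = (∫ w in E, g w ∂areaD).re := hre.symm
    _ ≤ ‖∫ w in E, g w ∂areaD‖ := Complex.re_le_norm _
    _ = ‖bergmanP (E.indicator fun _ => (lam:ℂ)) z‖ := by rw [hrepr]

theorem modular_inequality_bergman_implies_locally_constant_exponent
    (p : ℂ → ℝ) (hpm : Measurable p)
    (hp1 : ∀ z ∈ unitDisc, 1 ≤ p z)
    (hinf : 1 < essInf p (areaD.restrict unitDisc))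
    (hsup : ∃ M : ℝ, ∀ᵐ z ∂(areaD.restrict unitDisc), p z ≤ M)
    (C : ℝ) (hC : 0 < C)
    (hmod : ∀ f : ℂ → ℂ, Measurable f →
      (∫⁻ z in unitDisc, ENNReal.ofReal (‖f z‖ ^ p z) ∂areaD) < ⊤ →
      (∫⁻ z in unitDisc, ENNReal.ofReal (‖bergmanP f z‖ ^ p z) ∂areaD)
        ≤ ENNReal.ofReal C *
          ∫⁻ z in unitDisc, ENNReal.ofReal (‖f z‖ ^ p z) ∂areaD) :
    ∀ τ ∈ unitDisc, ∃ K : Set ℂ, K ⊆ unitDisc ∧ IsCompact K ∧ τ ∈ interior K ∧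
      ∃ c : ℝ, ∀ᵐ z ∂(areaD.restrict K), p z = c := by
  intro τ hτ
  obtain ⟨M, hM⟩ := hsup
  obtain ⟨r, κ, hr0, hκ0, hKsub, hker⟩ := kernel_bound τ hτ
  set K : Set ℂ := Metric.closedBall τ r with hKdef
  have hKm : MeasurableSet K := Metric.isClosed_closedBall.measurableSet
  set ν : Measure ℂ := areaD.restrict K with hν
  refine ⟨K, hKsub, isCompact_closedBall τ r, ?_, ?_⟩
  · rw [hKdef, interior_closedBall τ (ne_of_gt hr0)]
    exact Metric.mem_ball_self hr0
  -- transfer the a.e. bound p ≤ M to K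
  have hMK : ∀ᵐ z ∂ν, p z ≤ M :=
    ae_restrict_of_ae_restrict_of_subset hKsub hM
  have hνfin : ν univ < ⊤ := by
    rw [hν, Measure.restrict_apply_univ]
    exact lt_of_le_of_lt (measure_mono hKsub) areaD_unitDisc_lt_top
  have hνpos : 0 < ν univ := by
    rw [hν, Measure.restrict_apply_univ]
    exact lt_of_lt_of_le (areaD_ball_pos τ r hr0) (measure_mono Metric.ball_subset_closedBall)
  apply exists_ae_const ν p
  · -- nonemptiness: some rational a > M gives positive measure
    obtain ⟨a, ha⟩ := exists_rat_gt M
    refine ⟨a, ?_⟩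
    intro h0
    have hcompl : ν {z | ¬ p z < a} = 0 := by
      refine measure_mono_null ?_ (ae_iff.mp hMK)
      intro z hz
      simp only [mem_setOf_eq, not_lt] at hz ⊢
      intro hle
      exact absurd (lt_of_le_of_lt hle ha) (not_lt.2 hz)
    have hle : ν univ ≤ 0 := by
      have hcover : univ ⊆ {z : ℂ | p z < a} ∪ {z | ¬ p z < a} := by
        intro z _; by_cases h : p z < a
        · exact Or.inl h
        · exact Or.inr h
      calc ν univ ≤ ν ({z | p z < a} ∪ {z | ¬ p z < a}) := measure_mono hcover
        _ ≤ ν {z | p z < a} + ν {z | ¬ p z < a} := measure_union_le _ _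
        _ = 0 := by rw [h0, hcompl, add_zero]
    exact absurd (le_antisymm hle (by simp)) hνpos.ne'
  · -- lower bound: exponents below 1 have null sublevel sets on K
    intro a ha
    by_contra hlt
    push_neg at hlt
    apply ha
    rw [hν, Measure.restrict_apply (show MeasurableSet {z : ℂ | p z < (a:ℝ)} from hpm measurableSet_Iio)]
    have : {z | p z < a} ∩ K = ∅ := by
      ext z
      simp only [mem_inter_iff, mem_setOf_eq, mem_empty_iff_false, iff_false, not_and]
      intro hz hzK
      exact absurd (lt_of_lt_of_le hlt (hp1 z (hKsub hzK))) (not_lt.2 (le_of_lt hz))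
    rw [this, measure_empty]
  · -- the key dichotomy from the modular inequality
    intro a b hab
    by_contra hcon
    push_neg at hcon
    obtain ⟨ha, hb⟩ := hcon
    -- note 1 ≤ a
    have ha1 : (1:ℝ) ≤ (a:ℝ) := by
      by_contra h1
      push_neg at h1
      apply ha
      rw [hν, Measure.restrict_apply (show MeasurableSet {z : ℂ | p z < (a:ℝ)} from hpm measurableSet_Iio)]
      have : {z | p z < a} ∩ K = ∅ := by
        ext z
        simp only [mem_inter_iff, mem_setOf_eq, mem_empty_iff_false, iff_false, not_and]
        intro hz hzK
        exact absurd (lt_of_lt_of_le h1 (hp1 z (hKsub hzK))) (not_lt.2 (le_of_lt hz))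
      rw [this, measure_empty]
    set E₁ : Set ℂ := {z | p z < a} ∩ K with hE₁def
    set E₂ : Set ℂ := {z | (b:ℝ) < p z} ∩ K with hE₂def
    have hE₁m : MeasurableSet E₁ := (hpm measurableSet_Iio).inter hKm
    have hE₂m : MeasurableSet E₂ := (hpm measurableSet_Ioi).inter hKm
    have hE₁K : E₁ ⊆ K := inter_subset_right
    have hE₂K : E₂ ⊆ K := inter_subset_right
    have hE₁d : E₁ ⊆ unitDisc := hE₁K.trans hKsub
    have hE₂d : E₂ ⊆ unitDisc := hE₂K.trans hKsub
    have hE₁ne : areaD E₁ ≠ 0 := by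
      rw [hν, Measure.restrict_apply (show MeasurableSet {z : ℂ | p z < (a:ℝ)} from hpm measurableSet_Iio)] at ha
      exact ha
    have hE₂ne : areaD E₂ ≠ 0 := by
      rw [hν, Measure.restrict_apply (show MeasurableSet {z : ℂ | ((b:ℚ):ℝ) < p z} from hpm measurableSet_Ioi)] at hb
      exact hb
    have hE₁top : areaD E₁ < ⊤ := lt_of_le_of_lt (measure_mono hE₁d) areaD_unitDisc_lt_top
    have hE₂top : areaD E₂ < ⊤ := lt_of_le_of_lt (measure_mono hE₂d) areaD_unitDisc_lt_top
    set m₁ : ℝ := (areaD E₁).toReal with hm₁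
    set m₂ : ℝ := (areaD E₂).toReal with hm₂
    have hm₁0 : 0 < m₁ := ENNReal.toReal_pos hE₁ne hE₁top.ne
    have hm₂0 : 0 < m₂ := ENNReal.toReal_pos hE₂ne hE₂top.ne
    -- the main inequality for all large lam
    have key : ∀ lam : ℝ, 1 ≤ lam → 1 ≤ lam * κ * m₁ →
        m₂ * (lam * κ * m₁) ^ (b:ℝ) ≤ C * (lam ^ (a:ℝ) * m₁) := by
      intro lam hlam1 hlamκ
      have hlam0 : (0:ℝ) ≤ lam := le_trans zero_le_one hlam1
      set f : ℂ → ℂ := E₁.indicator fun _ => (lam : ℂ) with hf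
      have hfm : Measurable f := measurable_const.indicator hE₁m
      -- modular of f
      have hfptwise : ∀ z ∈ unitDisc,
          ENNReal.ofReal (‖f z‖ ^ p z) ≤ ENNReal.ofReal (lam ^ (a:ℝ)) := by
        intro z hzd
        apply ENNReal.ofReal_le_ofReal
        by_cases hz : z ∈ E₁
        · have : ‖f z‖ = lam := by
            simp [hf, Set.indicator_of_mem hz, Complex.norm_real, Real.norm_eq_abs, _root_.abs_of_nonneg hlam0]
          rw [this]
          exact Real.rpow_le_rpow_of_exponent_le hlam1 (le_of_lt hz.1)
        · have : ‖f z‖ = 0 := by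
            simp [hf, Set.indicator_of_notMem hz]
          rw [this, Real.zero_rpow (by linarith [hp1 z hzd] : p z ≠ 0)]
          positivity
      have hffin : (∫⁻ z in unitDisc, ENNReal.ofReal (‖f z‖ ^ p z) ∂areaD) < ⊤ := by
        calc (∫⁻ z in unitDisc, ENNReal.ofReal (‖f z‖ ^ p z) ∂areaD)
            ≤ ∫⁻ _ in unitDisc, ENNReal.ofReal (lam ^ (a:ℝ)) ∂areaD := by
              exact setLIntegral_mono_ae' measurableSet_unitDisc (ae_of_all _ hfptwise)
          _ = ENNReal.ofReal (lam ^ (a:ℝ)) * areaD unitDisc := setLIntegral_const _ _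
          _ < ⊤ := ENNReal.mul_lt_top ENNReal.ofReal_lt_top areaD_unitDisc_lt_top
      have hRHS : (∫⁻ z in unitDisc, ENNReal.ofReal (‖f z‖ ^ p z) ∂areaD)
          ≤ ENNReal.ofReal (lam ^ (a:ℝ)) * areaD E₁ := by
        have heq : (∫⁻ z in unitDisc, ENNReal.ofReal (‖f z‖ ^ p z) ∂areaD)
            = ∫⁻ z in E₁, ENNReal.ofReal (‖f z‖ ^ p z) ∂areaD := by
          have hstep1 : (∫⁻ z in unitDisc, ENNReal.ofReal (‖f z‖ ^ p z) ∂areaD)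
              = ∫⁻ z in unitDisc,
                  E₁.indicator (fun z => ENNReal.ofReal (‖f z‖ ^ p z)) z ∂areaD := by
            refine setLIntegral_congr_fun measurableSet_unitDisc (fun z hzd => ?_)
            by_cases hz : z ∈ E₁
            · rw [Set.indicator_of_mem hz]
            · rw [Set.indicator_of_notMem hz]
              have : ‖f z‖ = 0 := by simp [hf, Set.indicator_of_notMem hz]
              rw [this, Real.zero_rpow (by linarith [hp1 z hzd] : p z ≠ 0)]
              simp
          rw [hstep1, lintegral_indicator hE₁m, Measure.restrict_restrict hE₁m,
            Set.inter_eq_self_of_subset_left hE₁d]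
        rw [heq]
        calc (∫⁻ z in E₁, ENNReal.ofReal (‖f z‖ ^ p z) ∂areaD)
            ≤ ∫⁻ _ in E₁, ENNReal.ofReal (lam ^ (a:ℝ)) ∂areaD :=
              setLIntegral_mono_ae' hE₁m (ae_of_all _ fun z hz => hfptwise z (hE₁d hz))
          _ = ENNReal.ofReal (lam ^ (a:ℝ)) * areaD E₁ := setLIntegral_const _ _
      have hLHS : ENNReal.ofReal ((lam * κ * m₁) ^ (b:ℝ)) * areaD E₂
          ≤ ∫⁻ z in unitDisc, ENNReal.ofReal (‖bergmanP f z‖ ^ p z) ∂areaD := by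
        calc ENNReal.ofReal ((lam * κ * m₁) ^ (b:ℝ)) * areaD E₂
            = ∫⁻ _ in E₂, ENNReal.ofReal ((lam * κ * m₁) ^ (b:ℝ)) ∂areaD :=
              (setLIntegral_const _ _).symm
          _ ≤ ∫⁻ z in E₂, ENNReal.ofReal (‖bergmanP f z‖ ^ p z) ∂areaD := by
              refine setLIntegral_mono_ae' hE₂m (ae_of_all _ fun z hz => ?_)
              apply ENNReal.ofReal_le_ofReal
              have hlow := bergman_lower τ r κ lam hlam0 hker E₁ hE₁m
                (fun x hx => hx.2) hE₁d hE₁top z (hE₂K hz)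
              calc (lam * κ * m₁) ^ (b:ℝ)
                  ≤ (lam * κ * m₁) ^ (p z) :=
                    Real.rpow_le_rpow_of_exponent_le hlamκ (le_of_lt hz.1)
                _ ≤ ‖bergmanP f z‖ ^ (p z) := by
                    refine Real.rpow_le_rpow (by positivity) hlow ?_
                    have := hp1 z (hE₂d hz)
                    linarith
          _ ≤ ∫⁻ z in unitDisc, ENNReal.ofReal (‖bergmanP f z‖ ^ p z) ∂areaD :=
              lintegral_mono_set hE₂d
      have hchain : ENNReal.ofReal ((lam * κ * m₁) ^ (b:ℝ)) * areaD E₂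
          ≤ ENNReal.ofReal C * (ENNReal.ofReal (lam ^ (a:ℝ)) * areaD E₁) := by
        calc ENNReal.ofReal ((lam * κ * m₁) ^ (b:ℝ)) * areaD E₂
            ≤ ∫⁻ z in unitDisc, ENNReal.ofReal (‖bergmanP f z‖ ^ p z) ∂areaD := hLHS
          _ ≤ ENNReal.ofReal C *
              ∫⁻ z in unitDisc, ENNReal.ofReal (‖f z‖ ^ p z) ∂areaD :=
              hmod f hfm hffin
          _ ≤ ENNReal.ofReal C * (ENNReal.ofReal (lam ^ (a:ℝ)) * areaD E₁) :=
              mul_le_mul_right hRHS _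
      -- convert to reals
      have hfin2 : ENNReal.ofReal C * (ENNReal.ofReal (lam ^ (a:ℝ)) * areaD E₁) ≠ ⊤ :=
        (ENNReal.mul_lt_top ENNReal.ofReal_lt_top
          (ENNReal.mul_lt_top ENNReal.ofReal_lt_top hE₁top)).ne
      have := ENNReal.toReal_mono hfin2 hchain
      rw [ENNReal.toReal_mul, ENNReal.toReal_mul, ENNReal.toReal_mul,
        ENNReal.toReal_ofReal (by positivity), ENNReal.toReal_ofReal (le_of_lt hC),
        ENNReal.toReal_ofReal (by positivity)] at this
      calc m₂ * (lam * κ * m₁) ^ (b:ℝ) = (lam * κ * m₁) ^ (b:ℝ) * m₂ := by ring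
        _ ≤ C * (lam ^ (a:ℝ) * m₁) := this
    -- derive a contradiction as lam → ∞
    have hba : (0:ℝ) < (b:ℝ) - (a:ℝ) := by linarith
    set Q : ℝ := C * m₁ / (m₂ * (κ * m₁) ^ (b:ℝ)) with hQ
    have hQ0 : 0 < m₂ * (κ * m₁) ^ (b:ℝ) := by positivity
    obtain ⟨lam, hlam⟩ := ((tendsto_rpow_atTop hba).eventually_gt_atTop Q).and
      ((Filter.eventually_ge_atTop (max 1 (1 / (κ * m₁)))).and
        (Filter.eventually_ge_atTop 1)) |>.exists
    obtain ⟨hlamQ, hlamM, hlam1⟩ := hlam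
    have hlam0 : (0:ℝ) < lam := lt_of_lt_of_le zero_lt_one hlam1
    have hlamκ : 1 ≤ lam * κ * m₁ := by
      have h1 : 1 / (κ * m₁) ≤ lam := le_trans (le_max_right _ _) hlamM
      have hκm : 0 < κ * m₁ := by positivity
      rw [div_le_iff₀ hκm] at h1
      calc (1:ℝ) ≤ lam * (κ * m₁) := h1
        _ = lam * κ * m₁ := by ring
    have hkey := key lam hlam1 hlamκ
    -- expand (lam * κ * m₁) ^ b = lam ^ b * (κ * m₁) ^ b
    have hexp : (lam * κ * m₁) ^ (b:ℝ) = lam ^ (b:ℝ) * (κ * m₁) ^ (b:ℝ) := by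
      rw [mul_assoc, Real.mul_rpow (le_of_lt hlam0) (by positivity)]
    rw [hexp] at hkey
    -- so lam ^ b * (m₂ * (κ*m₁)^b) ≤ C * m₁ * lam ^ a
    have h2 : lam ^ (b:ℝ) * (m₂ * (κ * m₁) ^ (b:ℝ)) ≤ C * m₁ * lam ^ (a:ℝ) := by
      nlinarith [hkey]
    have h3 : lam ^ ((b:ℝ) - (a:ℝ)) ≤ Q := by
      rw [Real.rpow_sub hlam0, hQ, div_le_div_iff₀ (Real.rpow_pos_of_pos hlam0 _) hQ0]
      calc lam ^ (b:ℝ) * (m₂ * (κ * m₁) ^ (b:ℝ)) ≤ C * m₁ * lam ^ (a:ℝ) := h2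
        _ = C * m₁ * lam ^ (a:ℝ) := rfl
    exact absurd h3 (not_le.2 hlamQ)

end
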